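/- Concentration of the empirical means under forced exploration: Let K ≥ 1, μ ∈ ℝ^K, and let (Y_{a,n})_{a∈{1,…,K}, n≥1} be a jointly independent family of real random variables on a probability space (Ω,P) with Y_{a,n} of law N(μ_a, 1). Set μ̂_{a,n} = (1/n)·Σ_{m=1}^n Y_{a,m}. Let (N_a(t))_{a,t} be measurable ℕ-valued random variables satisfying, almost surely, 1 ≤ N_a(t) ≤ t and N_a(t) ≥ √t/(4K) − 2K for all a and t, and set μ̂_a(t) = μ̂_{a,N_a(t)}. Then for every κ > 0 and every integer T ≥ 4, with g(T) = ⌊T^{1/4}⌋, C₄ = κ²/(16K) and C₅ = (4K/κ²)·e^{(2K+1)κ²/2}, the probability that there exist t with g(T) ≤ t ≤ T and a ∈ {1,…,K} such that |μ̂_a(t) − μ_a| ≥ κ is at most C₅·T·e^{−C₄·T^{1/8}}. -/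

import Mathlib

open MeasureTheory ProbabilityTheory Real
open scoped ENNReal NNReal

lemma gpdf_mul (m t x : ℝ) :
    Real.exp (t * x) * gaussianPDFReal m 1 x
      = Real.exp (t * m + t ^ 2 / 2) * gaussianPDFReal (m + t) 1 x := by
  simp only [gaussianPDFReal, NNReal.coe_one, mul_one]
  rw [mul_comm (Real.exp (t * x)), mul_comm (Real.exp (t * m + t ^ 2 / 2)), mul_assoc, mul_assoc,
    ← Real.exp_add, ← Real.exp_add]
  congr 1
  ring

lemma gauss_int (m t : ℝ) :
    ∫ x, Real.exp (t * x) ∂(gaussianReal m 1) = Real.exp (t * m + t ^ 2 / 2) := by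
  rw [gaussianReal_of_var_ne_zero _ one_ne_zero, gaussianPDF_def]
  have h1 : (fun x => ENNReal.ofReal (gaussianPDFReal m 1 x))
      = fun x => ((gaussianPDFReal m 1 x).toNNReal : ℝ≥0∞) := rfl
  rw [h1, integral_withDensity_eq_integral_smul
    (measurable_gaussianPDFReal m 1).real_toNNReal]
  have h2 : ∀ x, (gaussianPDFReal m 1 x).toNNReal • Real.exp (t * x)
      = Real.exp (t * m + t ^ 2 / 2) * gaussianPDFReal (m + t) 1 x := by
    intro x
    rw [NNReal.smul_def, smul_eq_mul, Real.coe_toNNReal _ (gaussianPDFReal_nonneg m 1 x),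
      mul_comm, gpdf_mul]
  simp_rw [h2]
  rw [integral_const_mul, integral_gaussianPDFReal_eq_one (m + t) one_ne_zero, mul_one]

lemma gauss_integrable (m t : ℝ) :
    Integrable (fun x => Real.exp (t * x)) (gaussianReal m 1) := by
  rw [gaussianReal_of_var_ne_zero _ one_ne_zero]
  rw [integrable_withDensity_iff (measurable_gaussianPDF m 1)
    (Filter.Eventually.of_forall fun x => ENNReal.ofReal_lt_top)]
  have h2 : ∀ x, Real.exp (t * x) * (gaussianPDF m 1 x).toReal
      = Real.exp (t * m + t ^ 2 / 2) * gaussianPDFReal (m + t) 1 x := by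
    intro x
    rw [gaussianPDF, ENNReal.toReal_ofReal (gaussianPDFReal_nonneg m 1 x), gpdf_mul]
  simp_rw [h2]
  exact (integrable_gaussianPDFReal (m + t) 1).const_mul _

lemma chernoff {Ω : Type} [MeasurableSpace Ω] {P : Measure Ω} [IsProbabilityMeasure P]
    {ι : Type} [MeasurableSpace ι] (X : ι → Ω → ℝ)
    (h_indep : iIndepFun X P)
    (h_meas : ∀ i, Measurable (X i)) (m : ℝ) (s : Finset ι)
    (hlaw : ∀ i ∈ s, P.map (X i) = gaussianReal m 1)
    {κ : ℝ} (hκ : 0 < κ) (hs : 1 ≤ s.card) :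
    P {ω | κ ≤ |(∑ i ∈ s, X i ω) / (s.card : ℝ) - m|}
      ≤ ENNReal.ofReal (2 * Real.exp (-((s.card : ℝ) * κ ^ 2 / 2))) := by
  set n : ℝ := (s.card : ℝ) with hn
  have hnpos : (0 : ℝ) < n := by
    simp only [hn, Nat.cast_pos]
    exact hs
  -- integrability and mgf of each term
  have h_int_i : ∀ t : ℝ, ∀ i ∈ s, Integrable (fun ω => Real.exp (t * X i ω)) P := by
    intro t i hi
    have h := gauss_integrable m t
    rw [← hlaw i hi] at h
    exact (integrable_map_measure
      (Measurable.aestronglyMeasurable ((measurable_id'.const_mul t).exp))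
      (h_meas i).aemeasurable).mp h
  have h_mgf_i : ∀ t : ℝ, ∀ i ∈ s, mgf (X i) P t = Real.exp (t * m + t ^ 2 / 2) := by
    intro t i hi
    have hmap : ∫ x, Real.exp (t * x) ∂(P.map (X i)) = Real.exp (t * m + t ^ 2 / 2) := by
      rw [hlaw i hi]; exact gauss_int m t
    rwa [integral_map (h_meas i).aemeasurable
      (Measurable.aestronglyMeasurable ((measurable_id'.const_mul t).exp))] at hmap
  have h_int : ∀ t : ℝ, Integrable (fun ω => Real.exp (t * (∑ i ∈ s, X i) ω)) P :=
    fun t => h_indep.integrable_exp_mul_sum h_meas (h_int_i t)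
  have h_mgf : ∀ t : ℝ, mgf (∑ i ∈ s, X i) P t = Real.exp (n * (t * m + t ^ 2 / 2)) := by
    intro t
    rw [h_indep.mgf_sum h_meas s, Finset.prod_congr rfl (h_mgf_i t), Finset.prod_const,
      ← Real.exp_nat_mul, hn]
  -- upper tail
  have hup : (P {ω | n * (m + κ) ≤ (∑ i ∈ s, X i) ω}).toReal
      ≤ Real.exp (-(n * κ ^ 2 / 2)) := by
    refine le_trans (measure_ge_le_exp_mul_mgf (n * (m + κ)) hκ.le (h_int κ)) ?_
    rw [h_mgf, ← Real.exp_add]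
    apply le_of_eq
    congr 1
    ring
  have hlo : (P {ω | (∑ i ∈ s, X i) ω ≤ n * (m - κ)}).toReal
      ≤ Real.exp (-(n * κ ^ 2 / 2)) := by
    refine le_trans (measure_le_le_exp_mul_mgf (n * (m - κ)) (neg_nonpos.mpr hκ.le)
      (h_int (-κ))) ?_
    rw [h_mgf, ← Real.exp_add]
    apply le_of_eq
    congr 1
    ring
  have hsub : {ω | κ ≤ |(∑ i ∈ s, X i ω) / n - m|}
      ⊆ {ω | n * (m + κ) ≤ (∑ i ∈ s, X i) ω} ∪ {ω | (∑ i ∈ s, X i) ω ≤ n * (m - κ)} := by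
    intro ω hω
    have hω' : κ ≤ |(∑ i ∈ s, X i ω) / n - m| := hω
    have hSω : (∑ i ∈ s, X i) ω = ∑ i ∈ s, X i ω := by simp
    rcases le_abs.mp hω' with h | h
    · left
      have : m + κ ≤ (∑ i ∈ s, X i ω) / n := by linarith
      have := (le_div_iff₀ hnpos).mp this
      simp only [Set.mem_setOf_eq, hSω]
      linarith
    · right
      have : (∑ i ∈ s, X i ω) / n ≤ m - κ := by linarith
      have := (div_le_iff₀ hnpos).mp this
      simp only [Set.mem_setOf_eq, hSω]
      linarith
  calc P {ω | κ ≤ |(∑ i ∈ s, X i ω) / n - m|}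
      ≤ P ({ω | n * (m + κ) ≤ (∑ i ∈ s, X i) ω} ∪ {ω | (∑ i ∈ s, X i) ω ≤ n * (m - κ)}) :=
        measure_mono hsub
    _ ≤ P {ω | n * (m + κ) ≤ (∑ i ∈ s, X i) ω} + P {ω | (∑ i ∈ s, X i) ω ≤ n * (m - κ)} :=
        measure_union_le _ _
    _ ≤ ENNReal.ofReal (Real.exp (-(n * κ ^ 2 / 2))) +
        ENNReal.ofReal (Real.exp (-(n * κ ^ 2 / 2))) := by
        gcongr
        · exact (ENNReal.le_ofReal_iff_toReal_le (measure_ne_top P _)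
            (Real.exp_nonneg _)).mpr hup
        · exact (ENNReal.le_ofReal_iff_toReal_le (measure_ne_top P _)
            (Real.exp_nonneg _)).mpr hlo
    _ = ENNReal.ofReal (2 * Real.exp (-(n * κ ^ 2 / 2))) := by
        rw [← ENNReal.ofReal_add (Real.exp_nonneg _) (Real.exp_nonneg _), two_mul]

set_option maxHeartbeats 1000000 in
/-- concentration of the empirical means under forced exploration. -/
theorem stmt7 (K : ℕ) (hK : 1 ≤ K) (μ : Fin K → ℝ)
    (Ω : Type) [MeasurableSpace Ω] (P : Measure Ω) [IsProbabilityMeasure P]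
    (Y : Fin K → ℕ → Ω → ℝ)
    (hYmeas : ∀ a n, Measurable (Y a n))
    (hYindep : iIndepFun
      (fun p : Fin K × {n : ℕ // 1 ≤ n} => Y p.1 p.2.1) P)
    (hYlaw : ∀ a n, 1 ≤ n → P.map (Y a n) = gaussianReal (μ a) 1)
    (N : Fin K → ℕ → Ω → ℕ)
    (hNmeas : ∀ a t, Measurable (N a t))
    (hN : ∀ᵐ ω ∂P, ∀ a t, 1 ≤ t →
      1 ≤ N a t ω ∧ N a t ω ≤ t ∧ Real.sqrt t / (4 * K) - 2 * K ≤ (N a t ω : ℝ))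
    (κ : ℝ) (hκ : 0 < κ) (T : ℕ) (hT : 4 ≤ T) :
    P {ω | ∃ t, ⌊(T : ℝ) ^ ((1 : ℝ) / 4)⌋₊ ≤ t ∧ t ≤ T ∧ ∃ a,
        κ ≤ |(∑ m ∈ Finset.Icc 1 (N a t ω), Y a m ω) / (N a t ω : ℝ) - μ a|} ≤
      ENNReal.ofReal ((4 * K / κ ^ 2) * Real.exp ((2 * K + 1) * κ ^ 2 / 2) * T *
        Real.exp (-(κ ^ 2 / (16 * K)) * (T : ℝ) ^ ((1 : ℝ) / 8))) := by
  have hKR : (1 : ℝ) ≤ K := by exact_mod_cast hK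
  have hKpos : (0 : ℝ) < K := by linarith
  have hTR : (4 : ℝ) ≤ T := by exact_mod_cast hT
  set g : ℕ := ⌊(T : ℝ) ^ ((1 : ℝ) / 4)⌋₊ with hg
  set y : ℝ := (T : ℝ) ^ ((1 : ℝ) / 4) with hy
  have hy0 : 0 ≤ y := Real.rpow_nonneg (by positivity) _
  have hy4 : y ^ (4 : ℕ) = T := by
    rw [hy, ← Real.rpow_natCast ((T:ℝ) ^ ((1:ℝ)/4)) 4, ← Real.rpow_mul (by positivity)]
    norm_num
  have hy43 : (4 : ℝ) / 3 ≤ y := by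
    by_contra h
    push_neg at h
    have h2 : y ^ (4:ℕ) < (4/3 : ℝ) ^ (4:ℕ) := pow_lt_pow_left₀ h hy0 (by norm_num)
    rw [hy4] at h2
    norm_num at h2
    linarith
  have hgy : y / 4 ≤ (g : ℝ) := by
    have h1 : y - 1 < (g : ℝ) := by
      have := Nat.lt_floor_add_one y
      push_cast at this ⊢
      linarith
    linarith
  have hg1 : 1 ≤ g := by
    have : (1 : ℝ) ≤ y := by linarith
    exact Nat.le_floor (by exact_mod_cast this)
  have hgT : (g : ℝ) ≤ (T : ℝ) := by
    have h1 : (g : ℝ) ≤ y := Nat.floor_le hy0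
    have h2 : y ≤ (T : ℝ) := by
      calc y = (T:ℝ) ^ ((1:ℝ)/4) := rfl
        _ ≤ (T:ℝ) ^ (1:ℝ) := Real.rpow_le_rpow_of_exponent_le (by linarith) (by norm_num)
        _ = (T:ℝ) := Real.rpow_one _
    linarith
  set G : ℝ := Real.sqrt g with hG
  have hG0 : 0 ≤ G := Real.sqrt_nonneg _
  -- √g ≥ T^{1/8}/2
  have hGlow : (T : ℝ) ^ ((1 : ℝ) / 8) / 2 ≤ G := by
    have h1 : Real.sqrt (y / 4) ≤ G := Real.sqrt_le_sqrt hgy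
    have h4 : Real.sqrt 4 = 2 := by
      rw [show (4:ℝ) = 2 ^ 2 by norm_num, Real.sqrt_sq (by norm_num : (0:ℝ) ≤ 2)]
    have h2 : Real.sqrt (y / 4) = Real.sqrt y / 2 := by
      rw [Real.sqrt_div hy0 4, h4]
    have h3 : Real.sqrt y = (T : ℝ) ^ ((1 : ℝ) / 8) := by
      rw [Real.sqrt_eq_rpow, hy, ← Real.rpow_mul (by positivity)]
      norm_num
    rw [h2, h3] at h1
    exact h1
  set c : ℝ := G / (4 * K) - 2 * K with hc
  set m₀ : ℕ := max 1 ⌈c⌉₊ with hm₀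
  have hcm₀ : c ≤ (m₀ : ℝ) := le_trans (Nat.le_ceil c)
    (by exact_mod_cast le_max_right 1 ⌈c⌉₊)
  have hcT : ⌈c⌉₊ ≤ T := by
    apply Nat.ceil_le.mpr
    have h1 : G / (4 * K) ≤ G := div_le_self hG0 (by linarith)
    have h2 : G ≤ (T : ℝ) := by
      have h3 : G ≤ Real.sqrt T := Real.sqrt_le_sqrt hgT
      have h4 : Real.sqrt (T : ℝ) ≤ (T : ℝ) :=
        Real.sqrt_le_iff.mpr ⟨by linarith, by nlinarith⟩
      linarith
    rw [hc]
    nlinarith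
  have hm₀T : m₀ ≤ T := max_le (by omega) hcT
  set B : Fin K → ℕ → Set Ω := fun a n =>
    {ω | κ ≤ |(∑ m ∈ Finset.Icc 1 n, Y a m ω) / (n : ℝ) - μ a|} with hB
  have hBbound : ∀ (a : Fin K) (n : ℕ), 1 ≤ n →
      P (B a n) ≤ ENNReal.ofReal (2 * Real.exp (-((n : ℝ) * κ ^ 2 / 2))) := by
    intro a n hn
    set s : Finset (Fin K × {m : ℕ // 1 ≤ m}) := (Finset.Icc 1 n).attach.map
      ⟨fun m => (a, ⟨m.1, (Finset.mem_Icc.mp m.2).1⟩), by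
        intro p q hpq
        simp only [Prod.mk.injEq, Subtype.mk.injEq] at hpq
        exact Subtype.ext hpq.2⟩ with hs
    have hcard : s.card = n := by
      rw [hs, Finset.card_map, Finset.card_attach, Nat.card_Icc]
      omega
    have hsum : ∀ ω, ∑ i ∈ s, Y i.1 i.2.1 ω = ∑ m ∈ Finset.Icc 1 n, Y a m ω := by
      intro ω
      rw [hs, Finset.sum_map]
      exact Finset.sum_attach (Finset.Icc 1 n) (fun m => Y a m ω)
    have hlaw' : ∀ i ∈ s, P.map ((fun p : Fin K × {m : ℕ // 1 ≤ m} => Y p.1 p.2.1) i)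
        = gaussianReal (μ a) 1 := by
      intro i hi
      rw [hs, Finset.mem_map] at hi
      obtain ⟨m, hm, rfl⟩ := hi
      exact hYlaw a m.1 (Finset.mem_Icc.mp m.2).1
    have hch := chernoff (fun p : Fin K × {m : ℕ // 1 ≤ m} => Y p.1 p.2.1) hYindep
      (fun p => hYmeas p.1 p.2.1) (μ a) s hlaw' hκ (by omega)
    have hset : B a n = {ω | κ ≤
        |(∑ i ∈ s, (fun p : Fin K × {m : ℕ // 1 ≤ m} => Y p.1 p.2.1) i ω) / (s.card : ℝ)
          - μ a|} := by
      ext ω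
      simp only [hB, Set.mem_setOf_eq, hsum ω, hcard]
    rw [hset, ← hcard]
    exact hch
  -- a.e. inclusion into a finite union
  have hmain : P {ω | ∃ t, g ≤ t ∧ t ≤ T ∧ ∃ a,
      κ ≤ |(∑ m ∈ Finset.Icc 1 (N a t ω), Y a m ω) / (N a t ω : ℝ) - μ a|} ≤
      P (⋃ a ∈ (Finset.univ : Finset (Fin K)), ⋃ n ∈ Finset.Icc m₀ T, B a n) := by
    refine measure_mono_ae ?_
    filter_upwards [hN] with ω hω
    intro hmem
    obtain ⟨t, hgt, htT, a, hdev⟩ := hmem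
    have ht1 : 1 ≤ t := le_trans hg1 hgt
    obtain ⟨hN1, hNt, hNlow⟩ := hω a t ht1
    have hmem2 : N a t ω ∈ Finset.Icc m₀ T := by
      rw [Finset.mem_Icc]
      refine ⟨max_le hN1 ?_, le_trans hNt htT⟩
      apply Nat.ceil_le.mpr
      refine le_trans ?_ hNlow
      rw [hc]
      have hst : G ≤ Real.sqrt t := Real.sqrt_le_sqrt (by exact_mod_cast hgt)
      have h4K : (0 : ℝ) < 4 * K := by linarith
      have hdd : G / (4 * K) ≤ Real.sqrt t / (4 * K) := by gcongr
      linarith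
    show ω ∈ ⋃ a ∈ (Finset.univ : Finset (Fin K)), ⋃ n ∈ Finset.Icc m₀ T, B a n
    simp only [Set.mem_iUnion]
    exact ⟨a, Finset.mem_univ a, N a t ω, hmem2, hdev⟩
  -- union bound
  have hsum1 : P (⋃ a ∈ (Finset.univ : Finset (Fin K)), ⋃ n ∈ Finset.Icc m₀ T, B a n)
      ≤ ∑ a ∈ (Finset.univ : Finset (Fin K)), ∑ n ∈ Finset.Icc m₀ T,
          ENNReal.ofReal (2 * Real.exp (-((n : ℝ) * κ ^ 2 / 2))) := by
    refine le_trans (measure_biUnion_finset_le _ _) (Finset.sum_le_sum fun a _ => ?_)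
    refine le_trans (measure_biUnion_finset_le _ _) (Finset.sum_le_sum fun n hn => ?_)
    exact hBbound a n (le_trans (le_max_left 1 _) (Finset.mem_Icc.mp hn).1)
  -- collapse the double sum
  have hsum3 : ∑ a ∈ (Finset.univ : Finset (Fin K)), ∑ n ∈ Finset.Icc m₀ T,
      ENNReal.ofReal (2 * Real.exp (-((n : ℝ) * κ ^ 2 / 2)))
      = ENNReal.ofReal ((K : ℝ) * ∑ n ∈ Finset.Icc m₀ T,
          2 * Real.exp (-((n : ℝ) * κ ^ 2 / 2))) := by
    have hinner : ∑ n ∈ Finset.Icc m₀ T,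
        ENNReal.ofReal (2 * Real.exp (-((n : ℝ) * κ ^ 2 / 2)))
        = ENNReal.ofReal (∑ n ∈ Finset.Icc m₀ T,
            2 * Real.exp (-((n : ℝ) * κ ^ 2 / 2))) :=
      (ENNReal.ofReal_sum_of_nonneg fun i _ => by positivity).symm
    rw [Finset.sum_congr rfl fun a _ => hinner, Finset.sum_const, Finset.card_univ,
      Fintype.card_fin, nsmul_eq_mul, ← ENNReal.ofReal_natCast K,
      ← ENNReal.ofReal_mul (by positivity)]
  refine le_trans (le_trans hmain (le_trans hsum1 (le_of_eq hsum3)))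
    (ENNReal.ofReal_le_ofReal ?_)
  -- the real-number estimate
  set x : ℝ := κ ^ 2 / 2 with hx
  have hx0 : 0 < x := by positivity
  set r : ℝ := Real.exp (-x) with hr
  clear_value g y G c m₀ x r
  have hr0 : 0 < r := by rw [hr]; exact Real.exp_pos _
  have hr1 : r < 1 := by
    rw [hr, show (1 : ℝ) = Real.exp 0 by simp]
    exact Real.exp_lt_exp.mpr (by linarith)
  have h1r : 0 < 1 - r := by linarith
  have hterm : ∀ n : ℕ, 2 * Real.exp (-((n : ℝ) * κ ^ 2 / 2)) = 2 * r ^ n := by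
    intro n
    congr 1
    rw [hr, ← Real.exp_nat_mul]
    congr 1
    rw [hx]
    ring
  have hgeom : ∑ n ∈ Finset.Icc m₀ T, r ^ n ≤ r ^ m₀ / (1 - r) := by
    rw [← Finset.Ico_add_one_right_eq_Icc, geom_sum_Ico (ne_of_lt hr1) (by omega : m₀ ≤ T + 1)]
    have heq : (r ^ (T + 1) - r ^ m₀) / (r - 1) = (r ^ m₀ - r ^ (T + 1)) / (1 - r) := by
      rw [← neg_div_neg_eq, neg_sub, neg_sub]
    rw [heq]
    gcongr
    nlinarith [pow_nonneg hr0.le (T + 1)]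
  have hrex : r * Real.exp x = 1 := by
    rw [hr, ← Real.exp_add, neg_add_cancel, Real.exp_zero]
  have hib : x * r ≤ 1 - r := by
    have h2 := mul_le_mul_of_nonneg_left (Real.add_one_le_exp x) hr0.le
    rw [hrex] at h2
    have h3 : r * (x + 1) = x * r + r := by ring
    linarith
  have hrm : r ^ m₀ ≤ Real.exp (-(c * x)) := by
    rw [hr, ← Real.exp_nat_mul]
    apply Real.exp_le_exp.mpr
    have h4 := mul_nonneg (sub_nonneg.mpr hcm₀) hx0.le
    have h5 : (c - (m₀ : ℝ)) * x = (m₀ : ℝ) * (-x) - (-(c * x)) := by ring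
    linarith [h4, h5.symm.le]
  have hexp5 : Real.exp (-(G * κ ^ 2 / (8 * K)))
      ≤ (T : ℝ) * Real.exp (-(κ ^ 2 / (16 * K)) * (T : ℝ) ^ ((1 : ℝ) / 8)) := by
    have h5 : Real.exp (-(G * κ ^ 2 / (8 * K)))
        ≤ Real.exp (-(κ ^ 2 / (16 * K)) * (T : ℝ) ^ ((1 : ℝ) / 8)) := by
      apply Real.exp_le_exp.mpr
      have h6 := mul_le_mul_of_nonneg_left
        (show (T : ℝ) ^ ((1 : ℝ) / 8) ≤ 2 * G by linarith)
        (by positivity : (0 : ℝ) ≤ κ ^ 2 / (16 * K))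
      have h7 : (κ ^ 2 / (16 * K)) * (2 * G) = G * κ ^ 2 / (8 * K) := by
        field_simp
        ring
      linarith
    calc Real.exp (-(G * κ ^ 2 / (8 * K)))
        ≤ Real.exp (-(κ ^ 2 / (16 * K)) * (T : ℝ) ^ ((1 : ℝ) / 8)) := h5
      _ ≤ (T : ℝ) * Real.exp (-(κ ^ 2 / (16 * K)) * (T : ℝ) ^ ((1 : ℝ) / 8)) := by
          nlinarith [Real.exp_pos (-(κ ^ 2 / (16 * K)) * (T : ℝ) ^ ((1 : ℝ) / 8)), hTR]
  have hKne : (K : ℝ) ≠ 0 := by linarith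
  have hκne : κ ≠ 0 := ne_of_gt hκ
  calc (K : ℝ) * ∑ n ∈ Finset.Icc m₀ T, 2 * Real.exp (-((n : ℝ) * κ ^ 2 / 2))
      = (K : ℝ) * 2 * ∑ n ∈ Finset.Icc m₀ T, r ^ n := by
        rw [Finset.sum_congr rfl fun n _ => hterm n, ← Finset.mul_sum]
        ring
    _ ≤ (K : ℝ) * 2 * (r ^ m₀ / (1 - r)) := by gcongr
    _ ≤ (K : ℝ) * 2 * (Real.exp (-(c * x)) / (x * r)) := by
        have := div_le_div₀ (Real.exp_nonneg (-(c * x))) hrm (by positivity) hib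
        gcongr
    _ = (4 * K / κ ^ 2) * Real.exp ((2 * K + 1) * κ ^ 2 / 2)
          * Real.exp (-(G * κ ^ 2 / (8 * K))) := by
        have hdiv : Real.exp (-(c * x)) / (x * r)
            = Real.exp (-(c * x) + x) / x := by
          rw [hr, Real.exp_neg, Real.exp_add]
          rw [div_eq_div_iff (by positivity) hx0.ne']
          field_simp [Real.exp_ne_zero]
          rw [← Real.exp_add, ← Real.exp_add, ← Real.exp_add]
          simp
        have hexpeq : -(c * x) + x = (2 * K + 1) * κ ^ 2 / 2 + -(G * κ ^ 2 / (8 * K)) := by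
          rw [hc, hx]
          field_simp
          ring
        rw [hdiv, hexpeq, Real.exp_add, hx]
        field_simp
        try ring
    _ ≤ (4 * K / κ ^ 2) * Real.exp ((2 * K + 1) * κ ^ 2 / 2)
          * ((T : ℝ) * Real.exp (-(κ ^ 2 / (16 * K)) * (T : ℝ) ^ ((1 : ℝ) / 8))) := by
        gcongr (4 * K / κ ^ 2) * Real.exp ((2 * K + 1) * κ ^ 2 / 2) * ?_ <;>
          first
          | positivity
          | exact hexp5
    _ = 4 * K / κ ^ 2 * Real.exp ((2 * K + 1) * κ ^ 2 / 2) * T *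
          Real.exp (-(κ ^ 2 / (16 * K)) * (T : ℝ) ^ ((1 : ℝ) / 8)) := by ring
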